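/- Let B = k[x,y,z], char k = 0, with δ(x) = 0, δ(y) = −2z, δ(z) = x², A = Ker δ = k[x, t] where t = x²y + z². Then the plinth ideal δ(B) ∩ A equals x²A, i.e., an element a ∈ A lies in δ(B) if and only if a ∈ x²A. -/

import Mathlib

open MvPolynomial
set_option linter.unusedSectionVars false
set_option maxHeartbeats 1000000
set_option maxRecDepth 10000

namespace Stmt19Aux

variable {k : Type*} [Field k] [CharZero k]

noncomputable section


def Ee : MvPolynomial (Fin 3) k ≃ₐ[k] Polynomial (MvPolynomial (Fin 2) k) :=
  (renameEquiv k (Equiv.swap (0 : Fin 3) 2)).trans (finSuccEquiv k 2)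

def Fe : MvPolynomial (Fin 3) k ≃ₐ[k] Polynomial (MvPolynomial (Fin 2) k) :=
  finSuccEquiv k 2

lemma Ee_X2 : Ee (X 2 : MvPolynomial (Fin 3) k) = Polynomial.X := by
  simp [Ee, renameEquiv_apply, rename_X, Equiv.swap_apply_right, finSuccEquiv_X_zero]

lemma Ee_X0 : Ee (X 0 : MvPolynomial (Fin 3) k) = Polynomial.C (X 1) := by
  have h : ((1 : Fin 2).succ : Fin 3) = 2 := rfl
  simp only [Ee, AlgEquiv.trans_apply, renameEquiv_apply, rename_X, Equiv.swap_apply_left]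
  rw [← h, finSuccEquiv_X_succ]

lemma Fe_X0 : Fe (X 0 : MvPolynomial (Fin 3) k) = Polynomial.X := by
  simp [Fe, finSuccEquiv_X_zero]

lemma Fe_X2 : Fe (X 2 : MvPolynomial (Fin 3) k) = Polynomial.C (X 1) := by
  have h : ((1 : Fin 2).succ : Fin 3) = 2 := rfl
  rw [Fe, ← h, finSuccEquiv_X_succ]

lemma prime_X0 : Prime (X 0 : MvPolynomial (Fin 3) k) := by
  rw [← MulEquiv.prime_iff Fe.toRingEquiv.toMulEquiv]
  rw [show Fe.toRingEquiv.toMulEquiv (X 0 : MvPolynomial (Fin 3) k) = Fe (X 0) from rfl, Fe_X0]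
  exact Polynomial.prime_X

lemma prime_X2 : Prime (X 2 : MvPolynomial (Fin 3) k) := by
  rw [← MulEquiv.prime_iff Ee.toRingEquiv.toMulEquiv]
  rw [show Ee.toRingEquiv.toMulEquiv (X 2 : MvPolynomial (Fin 3) k) = Ee (X 2) from rfl, Ee_X2]
  exact Polynomial.prime_X

lemma nd_x_z : ¬ (X 0 : MvPolynomial (Fin 3) k) ∣ X 2 := by
  intro h
  have h2 := map_dvd Fe.toAlgHom h
  rw [show Fe.toAlgHom (X 0 : MvPolynomial (Fin 3) k) = Fe (X 0) from rfl,
    show Fe.toAlgHom (X 2 : MvPolynomial (Fin 3) k) = Fe (X 2) from rfl, Fe_X0, Fe_X2,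
    Polynomial.X_dvd_iff, Polynomial.coeff_C_zero] at h2
  exact X_ne_zero 1 h2

lemma nd_z_x : ¬ (X 2 : MvPolynomial (Fin 3) k) ∣ X 0 := by
  intro h
  have h2 := map_dvd Ee.toAlgHom h
  rw [show Ee.toAlgHom (X 0 : MvPolynomial (Fin 3) k) = Ee (X 0) from rfl,
    show Ee.toAlgHom (X 2 : MvPolynomial (Fin 3) k) = Ee (X 2) from rfl, Ee_X0, Ee_X2,
    Polynomial.X_dvd_iff, Polynomial.coeff_C_zero] at h2
  exact X_ne_zero 1 h2

lemma nd_z_C {c : k} (hc : c ≠ 0) : ¬ (X 2 : MvPolynomial (Fin 3) k) ∣ C c := by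
  intro h
  have h2 := map_dvd Ee.toAlgHom h
  rw [show Ee.toAlgHom (X 2 : MvPolynomial (Fin 3) k) = Ee (X 2) from rfl, Ee_X2] at h2
  have h3 : Ee.toAlgHom (C c : MvPolynomial (Fin 3) k) = Polynomial.C (C c) := by
    rw [show (C c : MvPolynomial (Fin 3) k) = algebraMap k _ c from rfl]
    rw [AlgHom.commutes]
    rfl
  rw [h3, Polynomial.X_dvd_iff, Polynomial.coeff_C_zero] at h2
  exact hc (by simpa using h2)

lemma nd_x_two : ¬ (X 0 : MvPolynomial (Fin 3) k) ∣ 2 := by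
  intro h
  have h2 := map_dvd Fe.toAlgHom h
  rw [show Fe.toAlgHom (X 0 : MvPolynomial (Fin 3) k) = Fe (X 0) from rfl, Fe_X0,
    map_ofNat, Polynomial.X_dvd_iff] at h2
  simp at h2

lemma eq_zero_of_all_pow_dvd {W : MvPolynomial (Fin 3) k}
    (h : ∀ n : ℕ, (X 2 : MvPolynomial (Fin 3) k) ^ n ∣ W) : W = 0 := by
  by_contra hW
  have hp : Ee W ≠ 0 := by
    simpa using (EmbeddingLike.map_ne_zero_iff (f := Ee)).mpr hW
  have hd := map_dvd Ee.toAlgHom (h ((Ee W).natDegree + 1))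
  rw [map_pow, show Ee.toAlgHom (X 2 : MvPolynomial (Fin 3) k) = Ee (X 2) from rfl, Ee_X2,
    show Ee.toAlgHom W = Ee W from rfl] at hd
  have := Polynomial.natDegree_le_of_dvd hd hp
  rw [Polynomial.natDegree_X_pow] at this
  omega

lemma Ee_X1 : Ee (X 1 : MvPolynomial (Fin 3) k) = Polynomial.C (X 0) := by
  have h : ((0 : Fin 2).succ : Fin 3) = 1 := rfl
  have hsw : Equiv.swap (0 : Fin 3) 2 1 = 1 := by decide
  simp only [Ee, AlgEquiv.trans_apply, renameEquiv_apply, rename_X, hsw]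
  rw [← h, finSuccEquiv_X_succ]

def ev0 : MvPolynomial (Fin 3) k →ₐ[k] MvPolynomial (Fin 2) k :=
  aeval ![X 1, X 0, 0]

lemma ev0_eq : (ev0 (k := k)) =
    ((Polynomial.aeval (0 : MvPolynomial (Fin 2) k)).restrictScalars k).comp Ee.toAlgHom := by
  apply algHom_ext
  intro i
  fin_cases i
  · show ev0 (X 0 : MvPolynomial (Fin 3) k) =
      Polynomial.aeval (0 : MvPolynomial (Fin 2) k) (Ee (X 0))
    rw [Ee_X0]
    simp [ev0]
  · show ev0 (X 1 : MvPolynomial (Fin 3) k) =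
      Polynomial.aeval (0 : MvPolynomial (Fin 2) k) (Ee (X 1))
    rw [Ee_X1]
    simp [ev0]
  · show ev0 (X 2 : MvPolynomial (Fin 3) k) =
      Polynomial.aeval (0 : MvPolynomial (Fin 2) k) (Ee (X 2))
    rw [Ee_X2]
    simp [ev0]

lemma zdvd_of_ev0_eq_zero {f : MvPolynomial (Fin 3) k} (h : ev0 f = 0) :
    (X 2 : MvPolynomial (Fin 3) k) ∣ f := by
  have h1 : Polynomial.aeval (0 : MvPolynomial (Fin 2) k) (Ee f) = 0 := by
    have := congrArg (fun g => g f) ev0_eq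
    simpa using h ▸ this.symm
  rw [Polynomial.coe_aeval_eq_eval] at h1
  have h2 : Polynomial.X ∣ Ee f := by
    rw [Polynomial.X_dvd_iff, Polynomial.coeff_zero_eq_eval_zero]
    exact h1
  have h3 := map_dvd Ee.symm.toAlgHom h2
  rw [show Ee.symm.toAlgHom (Polynomial.X) = Ee.symm Polynomial.X from rfl,
    show Ee.symm.toAlgHom (Ee f) = Ee.symm (Ee f) from rfl, ← Ee_X2,
    AlgEquiv.symm_apply_apply, AlgEquiv.symm_apply_apply] at h3
  exact h3



def sg : MvPolynomial (Fin 3) k →ₐ[k] MvPolynomial (Fin 3) k :=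
  aeval ![X 0, X 1, -X 2]

lemma sg_X0 : sg (X 0 : MvPolynomial (Fin 3) k) = X 0 := by simp [sg]
lemma sg_X1 : sg (X 1 : MvPolynomial (Fin 3) k) = X 1 := by simp [sg]
lemma sg_X2 : sg (X 2 : MvPolynomial (Fin 3) k) = -X 2 := by simp [sg]

lemma sg_sg (f : MvPolynomial (Fin 3) k) : sg (sg f) = f := by
  have h : (sg (k := k)).comp sg = AlgHom.id k _ := by
    apply algHom_ext
    intro i
    fin_cases i <;> simp [sg]
  calc sg (sg f) = (sg.comp sg) f := rfl
  _ = f := by rw [h]; rfl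


def Gg : MvPolynomial (Fin 2) k ≃ₐ[k] Polynomial (MvPolynomial (Fin 1) k) :=
  finSuccEquiv k 1

lemma Gg_X0 : Gg (X 0 : MvPolynomial (Fin 2) k) = Polynomial.X := finSuccEquiv_X_zero

lemma Gg_X1 : Gg (X 1 : MvPolynomial (Fin 2) k) = Polynomial.C (X 0) := by
  have h : ((0 : Fin 1).succ : Fin 2) = 1 := rfl
  rw [Gg, ← h, finSuccEquiv_X_succ]

def Hh : MvPolynomial (Fin 1) k ≃ₐ[k] Polynomial k :=
  (renameEquiv k (Equiv.equivPUnit.{1, 1} (Fin 1))).trans (pUnitAlgEquiv k)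

lemma Hh_X0 : Hh (X 0 : MvPolynomial (Fin 1) k) = Polynomial.X := by
  simp [Hh, renameEquiv_apply, rename_X, pUnitAlgEquiv]

lemma expand_inj : Function.Injective (expand 2 : MvPolynomial (Fin 1) k →ₐ[k] _) := by
  have hcomm : (Hh.toAlgHom.comp (expand 2) : MvPolynomial (Fin 1) k →ₐ[k] Polynomial k)
      = (Polynomial.expand k 2).comp Hh.toAlgHom := by
    apply algHom_ext
    intro i
    fin_cases i
    · show Hh (expand 2 (X 0 : MvPolynomial (Fin 1) k)) = Polynomial.expand k 2 (Hh (X 0))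
      rw [expand_X, map_pow, Hh_X0, Polynomial.expand_X]
  intro q1 q2 h
  have e1 := congrArg (fun g => g q1) hcomm
  have e2 := congrArg (fun g => g q2) hcomm
  simp only [AlgHom.coe_comp, Function.comp_apply, AlgEquiv.toAlgHom_eq_coe,
    AlgHom.coe_coe, AlgEquiv.coe_algHom] at e1 e2
  apply Hh.injective
  apply Polynomial.expand_injective (n := 2) (by norm_num)
  rw [← e1, ← e2]
  exact congrArg Hh h

lemma key_dvd {P : MvPolynomial (Fin 2) k}
    (h : (X 0 : MvPolynomial (Fin 2) k) ^ 2 ∣ aeval ![X 0, X 1 ^ 2] P) :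
    (X 0 : MvPolynomial (Fin 2) k) ^ 2 ∣ P := by
  have hcomm : (Gg.toAlgHom.comp (aeval ![X 0, X 1 ^ 2]) :
      MvPolynomial (Fin 2) k →ₐ[k] Polynomial (MvPolynomial (Fin 1) k))
      = (Polynomial.mapAlgHom (expand 2)).comp Gg.toAlgHom := by
    apply algHom_ext
    intro i
    fin_cases i
    · show Gg (aeval ![X 0, X 1 ^ 2] (X 0 : MvPolynomial (Fin 2) k))
        = Polynomial.mapAlgHom (expand 2) (Gg (X 0))
      rw [Gg_X0]
      simp only [aeval_X, Matrix.cons_val_zero, Gg_X0, Polynomial.coe_mapAlgHom,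
        Polynomial.map_X]
    · show Gg (aeval ![X 0, X 1 ^ 2] (X 1 : MvPolynomial (Fin 2) k))
        = Polynomial.mapAlgHom (expand 2) (Gg (X 1))
      rw [Gg_X1]
      simp only [aeval_X, Matrix.cons_val_one, Matrix.head_cons, Matrix.cons_val_zero, map_pow, Gg_X1,
        Polynomial.coe_mapAlgHom, Polynomial.map_C]
      rw [← Polynomial.C_pow]
      congr 1
      exact (expand_X 2 0).symm
  have e := congrArg (fun g => g P) hcomm
  simp only [AlgHom.coe_comp, Function.comp_apply, AlgEquiv.toAlgHom_eq_coe,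
    AlgHom.coe_coe, AlgEquiv.coe_algHom, Polynomial.coe_mapAlgHom] at e
  obtain ⟨w, hw⟩ := h
  have hmap : Polynomial.map
      (↑(expand 2 : MvPolynomial (Fin 1) k →ₐ[k] MvPolynomial (Fin 1) k)) (Gg P)
      = Polynomial.X ^ 2 * Gg w := by
    rw [← e]
    have h3 := congrArg Gg hw
    rwa [map_mul, map_pow, Gg_X0] at h3
  have h2 : (Polynomial.X : Polynomial (MvPolynomial (Fin 1) k)) ^ 2 ∣ Gg P := by
    rw [Polynomial.X_pow_dvd_iff]
    intro d hd
    have hdvd2 : (Polynomial.X : Polynomial (MvPolynomial (Fin 1) k)) ^ 2 ∣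
        Polynomial.map (↑(expand 2 : MvPolynomial (Fin 1) k →ₐ[k] MvPolynomial (Fin 1) k))
          (Gg P) := ⟨Gg w, hmap⟩
    rw [Polynomial.X_pow_dvd_iff] at hdvd2
    have hc := hdvd2 d hd
    rw [Polynomial.coeff_map] at hc
    exact expand_inj (by rw [map_zero]; exact hc)
  obtain ⟨q, hq⟩ := h2
  refine ⟨Gg.symm q, ?_⟩
  apply Gg.injective
  rw [map_mul, map_pow, Gg_X0, AlgEquiv.apply_symm_apply, hq]



variable (δ : Derivation k (MvPolynomial (Fin 3) k) (MvPolynomial (Fin 3) k))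
  (hx : δ (X 0) = 0)
  (hy : δ (X 1) = -(2 : MvPolynomial (Fin 3) k) * X 2)
  (hz : δ (X 2) = (X 0) ^ 2)

include hx hy hz

lemma ker_adjoin {c : MvPolynomial (Fin 3) k}
    (hc : c ∈ Algebra.adjoin k
      {(X 0 : MvPolynomial (Fin 3) k), (X 0) ^ 2 * X 1 + (X 2) ^ 2}) : δ c = 0 := by
  induction hc using Algebra.adjoin_induction with
  | mem u hu =>
    simp only [Set.mem_insert_iff, Set.mem_singleton_iff] at hu
    rcases hu with rfl | rfl
    · exact hx
    · rw [map_add, Derivation.leibniz, Derivation.leibniz_pow, Derivation.leibniz_pow, hx, hy, hz]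
      simp only [smul_eq_mul, smul_zero, mul_zero, zero_mul, add_zero, zero_add, nsmul_eq_mul]
      ring
  | algebraMap r => exact Derivation.map_algebraMap δ r
  | add x y _ _ h1 h2 => rw [map_add, h1, h2, add_zero]
  | mul x y _ _ h1 h2 => rw [Derivation.leibniz, h1, h2]; simp

omit hx hy hz in
lemma sg_adjoin {c : MvPolynomial (Fin 3) k}
    (hc : c ∈ Algebra.adjoin k
      {(X 0 : MvPolynomial (Fin 3) k), (X 0) ^ 2 * X 1 + (X 2) ^ 2}) : sg c = c := by
  induction hc using Algebra.adjoin_induction with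
  | mem u hu =>
    simp only [Set.mem_insert_iff, Set.mem_singleton_iff] at hu
    rcases hu with rfl | rfl
    · exact sg_X0
    · rw [map_add, map_mul, map_pow, map_pow, sg_X0, sg_X1, sg_X2]
      ring
  | algebraMap r => exact sg.commutes r
  | add x y _ _ h1 h2 => rw [map_add, h1, h2]
  | mul x y _ _ h1 h2 => rw [map_mul, h1, h2]

lemma conj (f : MvPolynomial (Fin 3) k) : sg (δ (sg f)) = -δ f := by
  induction f using MvPolynomial.induction_on with
  | C a =>
    simp [show (C a : MvPolynomial (Fin 3) k) = algebraMap k _ a from rfl,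
      Derivation.map_algebraMap]
  | add p q hp hq =>
    rw [map_add, map_add, map_add, hp, hq, map_add, neg_add]
  | mul_X p i hp =>
    fin_cases i
    · show sg (δ (sg (p * X 0))) = -δ (p * X 0)
      rw [map_mul, sg_X0, Derivation.leibniz, Derivation.leibniz, hx]
      simp only [smul_eq_mul, mul_zero, zero_add, map_add, map_mul, sg_X0, sg_sg, hp]
      ring
    · show sg (δ (sg (p * X 1))) = -δ (p * X 1)
      rw [map_mul, sg_X1, Derivation.leibniz, Derivation.leibniz, hy]
      have h2 : sg (2 : MvPolynomial (Fin 3) k) = 2 := map_ofNat _ _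
      simp only [smul_eq_mul, map_add, map_mul, map_neg, sg_sg, sg_X1, sg_X2, hp, h2]
      ring
    · show sg (δ (sg (p * X 2))) = -δ (p * X 2)
      rw [map_mul, sg_X2, Derivation.leibniz, Derivation.leibniz, hz]
      simp only [Derivation.map_neg, hz, smul_eq_mul, map_add, map_mul, map_neg, map_pow,
        sg_sg, sg_X0, sg_X2, hp]
      ring



omit hx hy hz in
lemma odd_zdvd {f : MvPolynomial (Fin 3) k} (h : sg f = -f) :
    (X 2 : MvPolynomial (Fin 3) k) ∣ f := by
  apply zdvd_of_ev0_eq_zero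
  have hcomp : (ev0 (k := k)).comp sg = ev0 := by
    apply algHom_ext
    intro i
    fin_cases i
    · show ev0 (sg (X 0 : MvPolynomial (Fin 3) k)) = ev0 (X 0)
      rw [sg_X0]
    · show ev0 (sg (X 1 : MvPolynomial (Fin 3) k)) = ev0 (X 1)
      rw [sg_X1]
    · show ev0 (sg (X 2 : MvPolynomial (Fin 3) k)) = ev0 (X 2)
      rw [sg_X2, map_neg]
      simp [ev0]
  have h1 : ev0 (sg f) = ev0 f := AlgHom.congr_fun hcomp f
  rw [h, map_neg] at h1
  have h2 : (2 : MvPolynomial (Fin 2) k) * ev0 f = 0 := by linear_combination -h1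
  rcases mul_eq_zero.mp h2 with h3 | h3
  · norm_num at h3
  · exact h3

lemma descent {W : MvPolynomial (Fin 3) k} (hodd : sg W = -W) (hker : δ W = 0) : W = 0 := by
  have key : ∀ n : ℕ, ∃ u : MvPolynomial (Fin 3) k, W = X 2 ^ n * u ∧
      C ((n : k)) * (X 0 ^ 2 * u) = -(X 2 * δ u) ∧ sg u = (-1) ^ (n + 1) * u := by
    intro n
    induction n with
    | zero =>
      refine ⟨W, by simp, by simp [hker], by simpa using hodd⟩
    | succ n ih =>
      obtain ⟨u, hWu, hrel, hpar⟩ := ih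
      have hzu : (X 2 : MvPolynomial (Fin 3) k) ∣ u := by
        rcases n with _ | m
        · apply odd_zdvd
          simpa using hpar
        · have hdvd : (X 2 : MvPolynomial (Fin 3) k) ∣
              C (((m + 1 : ℕ) : k)) * (X 0 ^ 2 * u) := ⟨-δ u, by linear_combination hrel⟩
          rcases prime_X2.dvd_mul.mp hdvd with h | h
          · exact absurd h (nd_z_C (Nat.cast_ne_zero.mpr (Nat.succ_ne_zero m)))
          · rcases prime_X2.dvd_mul.mp h with h2 | h2
            · exact absurd (prime_X2.dvd_of_dvd_pow h2) nd_z_x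
            · exact h2
      obtain ⟨v, rfl⟩ := hzu
      have hXne : (X 2 : MvPolynomial (Fin 3) k) ≠ 0 := X_ne_zero 2
      refine ⟨v, by rw [hWu]; ring, ?_, ?_⟩
      · have hexp : δ (X 2 * v) = X 2 * δ v + v * X 0 ^ 2 := by
          rw [Derivation.leibniz, hz]
          simp only [smul_eq_mul]
          try ring
        rw [hexp] at hrel
        apply mul_left_cancel₀ hXne
        have hC : (C (((n + 1 : ℕ) : k)) : MvPolynomial (Fin 3) k) = C ((n : k)) + 1 := by
          rw [Nat.cast_succ, map_add, map_one]
        rw [hC]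
        linear_combination hrel
      · rw [map_mul, sg_X2] at hpar
        apply mul_left_cancel₀ hXne
        calc X 2 * sg v = -(-X 2 * sg v) := by ring
        _ = -((-1) ^ (n + 1) * (X 2 * v)) := by rw [hpar]
        _ = X 2 * ((-1) ^ (n + 1 + 1) * v) := by ring
  apply eq_zero_of_all_pow_dvd
  intro n
  obtain ⟨u, hWu, -, -⟩ := key n
  exact ⟨u, hWu⟩

omit hx hy hz in
lemma pure_adjoin {a b : MvPolynomial (Fin 3) k}
    (ha : a ∈ Algebra.adjoin k
      {(X 0 : MvPolynomial (Fin 3) k), (X 0) ^ 2 * X 1 + (X 2) ^ 2})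
    (hab : a = X 0 ^ 2 * b) :
    ∃ c ∈ Algebra.adjoin k
      {(X 0 : MvPolynomial (Fin 3) k), (X 0) ^ 2 * X 1 + (X 2) ^ 2},
      a = (X 0) ^ 2 * c := by
  have hr : ({(X 0 : MvPolynomial (Fin 3) k), (X 0) ^ 2 * X 1 + (X 2) ^ 2} :
      Set (MvPolynomial (Fin 3) k)) =
      Set.range ![(X 0 : MvPolynomial (Fin 3) k), (X 0) ^ 2 * X 1 + (X 2) ^ 2] := by
    ext u
    simp only [Set.mem_insert_iff, Set.mem_singleton_iff, Matrix.range_cons,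
      Matrix.range_empty, Set.union_empty, Set.union_singleton, Set.mem_setOf_eq]
    tauto
  rw [hr, Algebra.adjoin_range_eq_range_aeval] at ha ⊢
  obtain ⟨P, hP0⟩ := ha
  have hP : aeval ![(X 0 : MvPolynomial (Fin 3) k), (X 0) ^ 2 * X 1 + (X 2) ^ 2] P = a := hP0
  have hπa : aeval ![(X 0 : MvPolynomial (Fin 2) k), 0, X 1] a =
      aeval ![(X 0 : MvPolynomial (Fin 2) k), X 1 ^ 2] P := by
    rw [← hP, comp_aeval_apply]
    have hfun : (fun i => aeval ![(X 0 : MvPolynomial (Fin 2) k), 0, X 1]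
        (![(X 0 : MvPolynomial (Fin 3) k), (X 0) ^ 2 * X 1 + (X 2) ^ 2] i))
        = ![(X 0 : MvPolynomial (Fin 2) k), X 1 ^ 2] := by
      funext i
      fin_cases i
      · show aeval ![(X 0 : MvPolynomial (Fin 2) k), 0, X 1] (X 0 : MvPolynomial (Fin 3) k)
          = X 0
        simp
      · show aeval ![(X 0 : MvPolynomial (Fin 2) k), 0, X 1]
          ((X 0 : MvPolynomial (Fin 3) k) ^ 2 * X 1 + (X 2) ^ 2) = X 1 ^ 2
        simp
    rw [hfun]
  have hdvd : (X 0 : MvPolynomial (Fin 2) k) ^ 2 ∣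
      aeval ![(X 0 : MvPolynomial (Fin 2) k), X 1 ^ 2] P := by
    rw [← hπa, hab]
    refine ⟨aeval ![(X 0 : MvPolynomial (Fin 2) k), 0, X 1] b, ?_⟩
    rw [map_mul, map_pow]
    simp
  obtain ⟨Q, hQ⟩ := key_dvd hdvd
  refine ⟨aeval ![(X 0 : MvPolynomial (Fin 3) k), (X 0) ^ 2 * X 1 + (X 2) ^ 2] Q, ⟨Q, rfl⟩, ?_⟩
  rw [← hP, hQ, map_mul, map_pow]
  simp

end
end Stmt19Aux

open Stmt19Aux in
/-- Example 4.1 (plinth ideal): for the locally nilpotent derivation `δ` of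
`B = k[x,y,z]` with `δ x = 0`, `δ y = -2z`, `δ z = x²`, and
`A = Ker δ = k[x, t]`, `t = x²y + z²`, the plinth ideal `δ(B) ∩ A` equals `x²A`:
an element `a ∈ A` is of the form `δ ξ` iff `a ∈ x²A`. -/
theorem stmt19 {k : Type*} [Field k] [CharZero k]
    (δ : Derivation k (MvPolynomial (Fin 3) k) (MvPolynomial (Fin 3) k))
    (hx : δ (X 0) = 0)
    (hy : δ (X 1) = -(2 : MvPolynomial (Fin 3) k) * X 2)
    (hz : δ (X 2) = (X 0) ^ 2) :
    ∀ a : MvPolynomial (Fin 3) k,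
      a ∈ Algebra.adjoin k
        {(X 0 : MvPolynomial (Fin 3) k), (X 0) ^ 2 * X 1 + (X 2) ^ 2} →
      ((∃ ξ : MvPolynomial (Fin 3) k, δ ξ = a) ↔
        ∃ c ∈ Algebra.adjoin k
          {(X 0 : MvPolynomial (Fin 3) k), (X 0) ^ 2 * X 1 + (X 2) ^ 2},
          a = (X 0) ^ 2 * c) := by
  intro a ha
  constructor
  · rintro ⟨ξ, hξ⟩
    have hδa : δ a = 0 := ker_adjoin δ hx hy hz ha
    have hsa : sg a = a := sg_adjoin ha
    have hδsξ : δ (sg ξ) = -a := by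
      have h1 := conj δ hx hy hz (sg ξ)
      rw [sg_sg, hξ, hsa] at h1
      linear_combination h1
    have hδη : δ (ξ - sg ξ) = 2 * a := by
      rw [Derivation.map_sub, hξ, hδsξ]; ring
    have hsη : sg (ξ - sg ξ) = -(ξ - sg ξ) := by
      rw [map_sub, sg_sg]; ring
    have hδ2 : δ (2 : MvPolynomial (Fin 3) k) = 0 := by
      rw [show (2 : MvPolynomial (Fin 3) k) = algebraMap k _ 2 from (map_ofNat _ 2).symm]
      exact Derivation.map_algebraMap δ 2
    have hδW : δ (X 0 ^ 2 * (ξ - sg ξ) - 2 * (a * X 2)) = 0 := by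
      rw [Derivation.map_sub]
      simp only [Derivation.leibniz, Derivation.leibniz_pow, hx, hz, hδ2, hδη, hδa,
        smul_eq_mul, nsmul_eq_mul]
      ring
    have hsW : sg (X 0 ^ 2 * (ξ - sg ξ) - 2 * (a * X 2))
        = -(X 0 ^ 2 * (ξ - sg ξ) - 2 * (a * X 2)) := by
      rw [map_sub, map_mul, map_mul, map_mul, map_pow, sg_X0, sg_X2, hsη, hsa,
        show sg (2 : MvPolynomial (Fin 3) k) = 2 from map_ofNat _ _]
      ring
    have hW0 := descent δ hx hy hz hsW hδW
    have h2az : X 0 * (X 0 * (ξ - sg ξ)) = 2 * (a * X 2) := by linear_combination hW0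
    have hxa : (X 0 : MvPolynomial (Fin 3) k) ∣ a := by
      have hd : (X 0 : MvPolynomial (Fin 3) k) ∣ 2 * (a * X 2) :=
        ⟨X 0 * (ξ - sg ξ), h2az.symm⟩
      rcases prime_X0.dvd_mul.mp hd with h | h
      · exact absurd h nd_x_two
      · rcases prime_X0.dvd_mul.mp h with h1 | h1
        · exact h1
        · exact absurd h1 nd_x_z
    obtain ⟨a₁, ha₁⟩ := hxa
    have hcan : X 0 * (ξ - sg ξ) = 2 * (a₁ * X 2) := by
      apply mul_left_cancel₀ (X_ne_zero (R := k) (0 : Fin 3))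
      linear_combination h2az + 2 * X 2 * ha₁
    have hxa1 : (X 0 : MvPolynomial (Fin 3) k) ∣ a₁ := by
      have hd : (X 0 : MvPolynomial (Fin 3) k) ∣ 2 * (a₁ * X 2) := ⟨ξ - sg ξ, hcan.symm⟩
      rcases prime_X0.dvd_mul.mp hd with h | h
      · exact absurd h nd_x_two
      · rcases prime_X0.dvd_mul.mp h with h1 | h1
        · exact h1
        · exact absurd h1 nd_x_z
    obtain ⟨b, hb⟩ := hxa1
    exact pure_adjoin (b := b) ha (by rw [ha₁, hb]; ring)
  · rintro ⟨c, hc, rfl⟩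
    refine ⟨X 2 * c, ?_⟩
    rw [Derivation.leibniz, hz, ker_adjoin δ hx hy hz hc]
    simp only [smul_eq_mul, mul_zero, zero_add]
    ring
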